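/- The class of partially ordered groups is closed under extensions in preordered groups: if 0 → (K, P_K) → (G, P_G) → (H, P_H) → 0 is a short exact sequence of preordered groups (i.e., K = ker f, P_K = K ∩ P_G, f surjective with f(P_G) = P_H), and both P_K and P_H are reduced monoids, then P_G is a reduced monoid. -/
import Mathlib


/-- Partially ordered groups are closed under extensions in preordered
groups: if in a short exact sequence of preordered groups both the kernel cone
`ker f ∩ P_G` and the quotient cone `P_H = f(P_G)` are reduced, then `P_G` is reduced. -/
theorem stmt_13 (G H : Type*) [AddGroup G] [AddGroup H]
    (P : AddSubmonoid G) (Q : AddSubmonoid H)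
    (hconjG : ∀ g : G, ∀ p ∈ P, g + p - g ∈ P)
    (hconjH : ∀ h : H, ∀ q ∈ Q, h + q - h ∈ Q)
    (f : G →+ H) (hsurj : Function.Surjective f)
    (himg : ∀ y : H, y ∈ Q ↔ ∃ p ∈ P, f p = y)
    -- the kernel cone is reduced:
    (hKred : ∀ x y : G, f x = 0 → f y = 0 → x ∈ P → y ∈ P →
      x + y = 0 → x = 0 ∧ y = 0)
    -- the quotient cone is reduced:
    (hQred : ∀ x y : H, x ∈ Q → y ∈ Q → x + y = 0 → x = 0 ∧ y = 0) :
    ∀ x y : G, x ∈ P → y ∈ P → x + y = 0 → x = 0 ∧ y = 0 := by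
  intro x y hx hy hxy
  have hxQ : f x ∈ Q := (himg (f x)).mpr ⟨x, hx, rfl⟩
  have hyQ : f y ∈ Q := (himg (f y)).mpr ⟨y, hy, rfl⟩
  have hsum : f x + f y = 0 := by rw [← f.map_add, hxy, f.map_zero]
  obtain ⟨hfx, hfy⟩ := hQred (f x) (f y) hxQ hyQ hsum
  exact hKred x y hfx hfy hx hy hxy
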